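/- Let a, b > 0, ν ∈ (0,1), n ≥ 1, h = b/a, K(t) = (1+t)²/(4t), m_k = ⌊2^k ν⌋, r₀ = min{ν, 1-ν}, r_k = min{2 r_{k-1}, 1 − 2 r_{k-1}}. Then (1-ν)a + νb ≤ K(h^(1/2ⁿ))^{-r_n} · a^(1-ν) b^ν + (√a − √b)² − Σ_{k=0}^{n-1} r_k · [ (a^{m_k/2^k} b^{1 − m_k/2^k})^{1/2} − (a^{(m_k+1)/2^k} b^{1 − (m_k+1)/2^k})^{1/2} ]². -/

import Mathlib

open Real Finset

noncomputable def Kc (t : ℝ) : ℝ := (1 + t)^2 / (4 * t)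

noncomputable def rseq (ν : ℝ) : ℕ → ℝ
  | 0 => min ν (1 - ν)
  | k + 1 => min (2 * rseq ν k) (1 - 2 * rseq ν k)

noncomputable def mfl (ν : ℝ) (k : ℕ) : ℝ := ⌊(2:ℝ)^k * ν⌋

lemma rseq_mem (ν : ℝ) (h0 : 0 ≤ ν) (h1 : ν ≤ 1) : ∀ k, 0 ≤ rseq ν k ∧ rseq ν k ≤ 1/2 := by
  intro k
  induction k with
  | zero => constructor
            · simp [rseq]; constructor <;> linarith
            · simp only [rseq]; rcases le_total ν (1-ν) with h | h
              · rw [min_eq_left h]; linarith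
              · rw [min_eq_right h]; linarith
  | succ k ih => obtain ⟨l, r⟩ := ih
                 constructor
                 · simp [rseq]; constructor <;> linarith
                 · simp only [rseq]; rcases le_total (2 * rseq ν k) (1 - 2 * rseq ν k) with h | h
                   · rw [min_eq_left h]; linarith
                   · rw [min_eq_right h]; linarith

lemma rseq_double (ν : ℝ) (h0 : 0 ≤ ν) (h1 : ν ≤ 1/2) : ∀ k, rseq (2*ν) k = rseq ν (k+1) := by
  intro k
  induction k with
  | zero => show min (2*ν) (1 - 2*ν) = min (2 * rseq ν 0) (1 - 2 * rseq ν 0)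
            have : rseq ν 0 = ν := min_eq_left (by linarith)
            rw [this]
  | succ k ih => show min (2 * rseq (2*ν) k) (1 - 2 * rseq (2*ν) k) = _
                 rw [ih]; rfl

lemma rseq_double' (ν : ℝ) (h0 : 1/2 ≤ ν) (h1 : ν ≤ 1) : ∀ k, rseq (2*ν-1) k = rseq ν (k+1) := by
  intro k
  induction k with
  | zero => show min (2*ν-1) (1 - (2*ν-1)) = min (2 * rseq ν 0) (1 - 2 * rseq ν 0)
            have : rseq ν 0 = 1 - ν := min_eq_right (by linarith)
            rw [this, min_comm]
            congr 1 <;> ring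
  | succ k ih => show min (2 * rseq (2*ν-1) k) (1 - 2 * rseq (2*ν-1) k) = _
                 rw [ih]; rfl

lemma rseq_one : ∀ k, rseq 1 k = 0 := by
  intro k
  induction k with
  | zero => show min 1 (1-1) = 0; norm_num
  | succ k ih => show min (2 * rseq 1 k) (1 - 2 * rseq 1 k) = 0
                 rw [ih]; norm_num

lemma mfl_double (ν : ℝ) (k : ℕ) : mfl (2*ν) k = mfl ν (k+1) := by
  unfold mfl
  norm_num
  congr 1
  ring

lemma mfl_double' (ν : ℝ) (k : ℕ) : mfl (2*ν-1) k = mfl ν (k+1) - 2^k := by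
  unfold mfl
  have : (2:ℝ)^k * (2*ν-1) = 2^(k+1) * ν - ((2^k : ℤ) : ℝ) := by push_cast; ring
  rw [this, Int.floor_sub_intCast]
  push_cast
  ring

lemma sqrt_rpow' (a b : ℝ) (ha : 0 < a) (hb : 0 < b) (e : ℝ) :
    Real.sqrt (a*b) ^ e = a^(e/2) * b^(e/2) := by
  rw [Real.sqrt_eq_rpow, ← Real.rpow_mul (by positivity), Real.mul_rpow ha.le hb.le,
    show (1/2*e : ℝ) = e/2 by ring]

lemma L1 (a b : ℝ) (ha : 0 < a) (hb : 0 < b) (e : ℝ) :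
    Real.sqrt (a*b) ^ e * b ^ (1 - e) = a^(e/2) * b^(1-e/2) := by
  rw [sqrt_rpow' a b ha hb, mul_assoc, ← Real.rpow_add hb, show (e/2 + (1-e) : ℝ) = 1 - e/2 by ring]

lemma L2 (a b : ℝ) (ha : 0 < a) (hb : 0 < b) (e : ℝ) :
    a ^ e * Real.sqrt (a*b) ^ (1 - e) = a^((1+e)/2) * b^(1-(1+e)/2) := by
  rw [sqrt_rpow' a b ha hb, ← mul_assoc, ← Real.rpow_add ha,
    show (e + (1-e)/2 : ℝ) = (1+e)/2 by ring, show ((1-e)/2 : ℝ) = 1 - (1+e)/2 by ring]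


-- base case of star
lemma star_base (ν a b : ℝ) (ha : 0 < a) (hb : 0 < b) (h0 : 0 ≤ ν) (h1 : ν ≤ 1) :
    Kc ((b/a) ^ ((1:ℝ)/2^(0:ℕ))) ^ (rseq ν 0) * (a ^ ν * b ^ (1 - ν)) ≤ ν * a + (1 - ν) * b := by
  have hab : (0:ℝ) < a * b := mul_pos ha hb
  set s := Real.sqrt (a*b) with hs_def
  have hs : 0 < s := Real.sqrt_pos.mpr hab
  have hs2 : s^2 = a*b := Real.sq_sqrt hab.le
  set c := (a+b)/(2*s) with hc_def
  have hc : 0 < c := by positivity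
  have hKc : Kc ((b/a) ^ ((1:ℝ)/2^(0:ℕ))) = c^(2:ℕ) := by
    norm_num [Real.rpow_one]
    unfold Kc
    rw [hc_def, div_pow]
    rw [show ((2*s)^2 : ℝ) = 4*(a*b) by rw [mul_pow]; rw [hs2]; ring]
    field_simp
  have hsc : s * c = (a+b)/2 := by field_simp [hc_def]; rw [hc_def]; field_simp
  have hcr : ∀ w : ℝ, Kc ((b/a) ^ ((1:ℝ)/2^(0:ℕ))) ^ w = c ^ (2*w) := by
    intro w
    rw [hKc, ← Real.rpow_natCast c 2, ← Real.rpow_mul hc.le]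
    norm_num
  have hsr : ∀ w : ℝ, s ^ (2*w) = a ^ w * b ^ w := by
    intro w
    rw [hs_def, Real.sqrt_eq_rpow, ← Real.rpow_mul hab.le, show (1/2*(2*w) : ℝ) = w by ring,
      Real.mul_rpow ha.le hb.le]
  rcases le_total ν (1/2) with hhalf | hhalf
  · have hr : rseq ν 0 = ν := min_eq_left (by linarith)
    rw [hr, hcr]
    have amgm := Real.geom_mean_le_arith_mean2_weighted (by linarith : (0:ℝ) ≤ 2*ν)
      (by linarith : (0:ℝ) ≤ 1 - 2*ν) (mul_pos hs hc).le hb.le (by ring)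
    calc c ^ (2*ν) * (a ^ ν * b ^ (1-ν)) = (s*c) ^ (2*ν) * b ^ (1-2*ν) := by
            rw [Real.mul_rpow hs.le hc.le, hsr]
            rw [show ((1:ℝ)-ν) = ν + (1-2*ν) by ring, Real.rpow_add hb]
            ring
      _ ≤ 2*ν * (s*c) + (1-2*ν) * b := amgm
      _ = ν * a + (1-ν) * b := by rw [hsc]; ring
  · have hr : rseq ν 0 = 1 - ν := min_eq_right (by linarith)
    rw [hr, hcr]
    have amgm := Real.geom_mean_le_arith_mean2_weighted (by linarith : (0:ℝ) ≤ 2-2*ν)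
      (by linarith : (0:ℝ) ≤ 2*ν-1) (mul_pos hs hc).le ha.le (by ring)
    calc c ^ (2*(1-ν)) * (a ^ ν * b ^ (1-ν)) = (s*c) ^ (2-2*ν) * a ^ (2*ν-1) := by
            rw [Real.mul_rpow hs.le hc.le, show (2-2*ν : ℝ) = 2*(1-ν) by ring, hsr]
            rw [show (ν:ℝ) = (1-ν) + (2*ν-1) by ring, Real.rpow_add ha]
            ring_nf
      _ ≤ (2-2*ν) * (s*c) + (2*ν-1) * a := amgm
      _ = ν * a + (1-ν) * b := by rw [hsc]; ring

set_option maxHeartbeats 1600000 in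
lemma star (n : ℕ) : ∀ (ν a b : ℝ), 0 < a → 0 < b → 0 ≤ ν → ν ≤ 1 →
    Kc ((b/a) ^ ((1:ℝ)/2^n)) ^ (rseq ν n) * (a ^ ν * b ^ (1 - ν))
      + (∑ k ∈ Finset.range n, rseq ν k * (Real.sqrt (a ^ (mfl ν k / 2^k) * b ^ (1 - mfl ν k / 2^k)) - Real.sqrt (a ^ ((mfl ν k + 1) / 2^k) * b ^ (1 - (mfl ν k + 1) / 2^k)))^2)
      ≤ ν * a + (1 - ν) * b := by
  induction n with
  | zero =>
    intro ν a b ha hb h0 h1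
    simpa using star_base ν a b ha hb h0 h1
  | succ n ih =>
    intro ν a b ha hb h0 h1
    have hab : (0:ℝ) < a * b := mul_pos ha hb
    have hba : (0:ℝ) < b / a := div_pos hb ha
    have hs : 0 < Real.sqrt (a*b) := Real.sqrt_pos.mpr hab
    have hsab : Real.sqrt (a*b) = Real.sqrt a * Real.sqrt b := Real.sqrt_mul ha.le b
    have hsa2 : Real.sqrt a ^ 2 = a := Real.sq_sqrt ha.le
    have hsb2 : Real.sqrt b ^ 2 = b := Real.sq_sqrt hb.le
    have hsa : 0 < Real.sqrt a := Real.sqrt_pos.mpr ha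
    have hsb : 0 < Real.sqrt b := Real.sqrt_pos.mpr hb
    have hexp : ((1:ℝ)/2) * ((1:ℝ)/2^n) = (1:ℝ)/2^(n+1) := by
      rw [pow_succ]; ring
    rcases eq_or_lt_of_le h1 with h1' | h1'
    · -- ν = 1 : trivial
      subst h1'
      rw [rseq_one]
      have hz : ∀ k ∈ Finset.range (n+1), rseq 1 k * (Real.sqrt (a ^ (mfl 1 k / 2^k) * b ^ (1 - mfl 1 k / 2^k)) - Real.sqrt (a ^ ((mfl 1 k + 1) / 2^k) * b ^ (1 - (mfl 1 k + 1) / 2^k)))^2 = 0 := by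
        intro k _; rw [rseq_one]; ring
      rw [Finset.sum_eq_zero hz, Real.rpow_zero, Real.rpow_one]
      norm_num
    have hfl0 : mfl ν 0 = 0 := by
      unfold mfl
      norm_num
      exact ⟨h0, h1'⟩
    have hT0 : rseq ν 0 * (Real.sqrt (a ^ (mfl ν 0 / 2^(0:ℕ)) * b ^ (1 - mfl ν 0 / 2^(0:ℕ))) - Real.sqrt (a ^ ((mfl ν 0 + 1) / 2^(0:ℕ)) * b ^ (1 - (mfl ν 0 + 1) / 2^(0:ℕ))))^2
        = rseq ν 0 * (Real.sqrt b - Real.sqrt a)^2 := by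
      rw [hfl0]
      norm_num [Real.rpow_one, Real.rpow_zero]
    rw [Finset.sum_range_succ', hT0]
    have hsq : (Real.sqrt b - Real.sqrt a)^2 = b - 2*(Real.sqrt a * Real.sqrt b) + a := by
      rw [sub_sq, hsb2, hsa2]; ring
    rcases le_total ν (1/2) with hhalf | hhalf
    · -- case ν ≤ 1/2 : substitute (2ν, √(ab), b)
      have hr0 : rseq ν 0 = ν := min_eq_left (by linarith)
      have IH := ih (2*ν) (Real.sqrt (a*b)) b hs hb (by linarith) (by linarith)
      have hq : b / Real.sqrt (a*b) = (b/a) ^ ((1:ℝ)/2) := by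
        rw [← Real.sqrt_eq_rpow, Real.sqrt_div hb.le, hsab]
        rw [div_eq_div_iff (by positivity) (ne_of_gt hsa)]
        nlinarith [hsb2]
      have hKarg : (b/Real.sqrt (a*b)) ^ ((1:ℝ)/2^n) = (b/a) ^ ((1:ℝ)/2^(n+1)) := by
        rw [hq, ← Real.rpow_mul hba.le, hexp]
      have hmain : Real.sqrt (a*b) ^ (2*ν) * b ^ (1 - 2*ν) = a ^ ν * b ^ (1 - ν) := by
        rw [L1 a b ha hb (2*ν), show (2*ν/2 : ℝ) = ν by ring]
      have hterm : ∀ k ∈ Finset.range n,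
          rseq (2*ν) k * (Real.sqrt (Real.sqrt (a*b) ^ (mfl (2*ν) k / 2^k) * b ^ (1 - mfl (2*ν) k / 2^k)) - Real.sqrt (Real.sqrt (a*b) ^ ((mfl (2*ν) k + 1) / 2^k) * b ^ (1 - (mfl (2*ν) k + 1) / 2^k)))^2
          = rseq ν (k+1) * (Real.sqrt (a ^ (mfl ν (k+1) / 2^(k+1)) * b ^ (1 - mfl ν (k+1) / 2^(k+1))) - Real.sqrt (a ^ ((mfl ν (k+1) + 1) / 2^(k+1)) * b ^ (1 - (mfl ν (k+1) + 1) / 2^(k+1))))^2 := by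
        intro k _
        rw [rseq_double ν h0 hhalf, mfl_double]
        rw [L1 a b ha hb _, L1 a b ha hb _]
        rw [show (mfl ν (k+1) / 2^k) / 2 = mfl ν (k+1) / 2^(k+1) by rw [pow_succ]; ring,
          show ((mfl ν (k+1) + 1) / 2^k) / 2 = (mfl ν (k+1) + 1) / 2^(k+1) by rw [pow_succ]; ring]
      rw [hKarg, hmain, rseq_double ν h0 hhalf, Finset.sum_congr rfl hterm] at IH
      rw [hr0]
      have hfin : 2*ν*Real.sqrt (a*b) + (1-2*ν)*b + ν * (Real.sqrt b - Real.sqrt a)^2 = ν * a + (1-ν) * b := by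
        rw [hsq, hsab]; ring
      linarith [IH]
    · -- case ν ≥ 1/2 : substitute (2ν-1, a, √(ab))
      have hr0 : rseq ν 0 = 1 - ν := min_eq_right (by linarith)
      have IH := ih (2*ν-1) a (Real.sqrt (a*b)) ha hs (by linarith) (by linarith)
      have hq : Real.sqrt (a*b) / a = (b/a) ^ ((1:ℝ)/2) := by
        rw [← Real.sqrt_eq_rpow, Real.sqrt_div hb.le, hsab]
        rw [div_eq_div_iff (ne_of_gt ha) (ne_of_gt hsa)]
        nlinarith [hsa2]
      have hKarg : (Real.sqrt (a*b)/a) ^ ((1:ℝ)/2^n) = (b/a) ^ ((1:ℝ)/2^(n+1)) := by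
        rw [hq, ← Real.rpow_mul hba.le, hexp]
      have hmain : a ^ (2*ν-1) * Real.sqrt (a*b) ^ (1 - (2*ν-1)) = a ^ ν * b ^ (1 - ν) := by
        rw [L2 a b ha hb (2*ν-1), show ((1 + (2*ν-1))/2 : ℝ) = ν by ring]
      have hterm : ∀ k ∈ Finset.range n,
          rseq (2*ν-1) k * (Real.sqrt (a ^ (mfl (2*ν-1) k / 2^k) * Real.sqrt (a*b) ^ (1 - mfl (2*ν-1) k / 2^k)) - Real.sqrt (a ^ ((mfl (2*ν-1) k + 1) / 2^k) * Real.sqrt (a*b) ^ (1 - (mfl (2*ν-1) k + 1) / 2^k)))^2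
          = rseq ν (k+1) * (Real.sqrt (a ^ (mfl ν (k+1) / 2^(k+1)) * b ^ (1 - mfl ν (k+1) / 2^(k+1))) - Real.sqrt (a ^ ((mfl ν (k+1) + 1) / 2^(k+1)) * b ^ (1 - (mfl ν (k+1) + 1) / 2^(k+1))))^2 := by
        intro k _
        rw [rseq_double' ν hhalf h1, mfl_double']
        rw [L2 a b ha hb _, L2 a b ha hb _]
        have h2k : (0:ℝ) < 2^k := by positivity
        rw [show ((1:ℝ) + (mfl ν (k+1) - 2^k) / 2^k) / 2 = mfl ν (k+1) / 2^(k+1) by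
              rw [pow_succ]; field_simp; try ring,
          show ((1:ℝ) + ((mfl ν (k+1) - 2^k) + 1) / 2^k) / 2 = (mfl ν (k+1) + 1) / 2^(k+1) by
              rw [pow_succ]; field_simp; try ring]
      rw [hKarg, hmain, rseq_double' ν hhalf h1, Finset.sum_congr rfl hterm] at IH
      rw [hr0]
      have hfin : (2*ν-1)*a + (1-(2*ν-1))*Real.sqrt (a*b) + (1-ν) * (Real.sqrt b - Real.sqrt a)^2 = ν * a + (1-ν) * b := by
        rw [hsq, hsab]; ring
      linarith [IH]

theorem stmt9 (a b ν : ℝ) (ha : 0 < a) (hb : 0 < b) (hν : ν ∈ Set.Ioo (0:ℝ) 1)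
    (n : ℕ) (hn : 1 ≤ n) (h : ℝ) (hh : h = b / a) :
    (1 - ν) * a + ν * b ≤ Kc (h ^ ((1:ℝ)/2^n)) ^ (-(rseq ν n)) * (a ^ (1 - ν) * b ^ ν)
      + (Real.sqrt a - Real.sqrt b)^2 - (∑ k ∈ Finset.range n, rseq ν k * (Real.sqrt (a ^ (mfl ν k / 2^k) * b ^ (1 - mfl ν k / 2^k)) - Real.sqrt (a ^ ((mfl ν k + 1) / 2^k) * b ^ (1 - (mfl ν k + 1) / 2^k)))^2) := by
  obtain ⟨h0, h1⟩ := hν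
  subst hh
  have hst := star n ν a b ha hb h0.le h1.le
  have ht : (0:ℝ) < (b/a) ^ ((1:ℝ)/2^n) := Real.rpow_pos_of_pos (div_pos hb ha) _
  have hc : (0:ℝ) < Kc ((b/a) ^ ((1:ℝ)/2^n)) := by
    unfold Kc; positivity
  set c := Kc ((b/a) ^ ((1:ℝ)/2^n)) with hc_def
  set r := rseq ν n with hr_def
  have hx : (0:ℝ) < c^(-r) * (a^(1-ν)*b^ν) := by positivity
  have hy : (0:ℝ) < c^r * (a^ν*b^(1-ν)) := by positivity
  have e1 : c^(-r) * c^r = 1 := by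
    rw [← Real.rpow_add hc]; norm_num
  have e2 : a^(1-ν)*a^ν = a := by
    rw [← Real.rpow_add ha]; norm_num
  have e3 : b^ν*b^(1-ν) = b := by
    rw [← Real.rpow_add hb]; norm_num
  have hxy : (c^(-r) * (a^(1-ν)*b^ν)) * (c^r * (a^ν*b^(1-ν))) = a*b := by
    rw [show (c^(-r) * (a^(1-ν)*b^ν)) * (c^r * (a^ν*b^(1-ν)))
        = (c^(-r)*c^r) * ((a^(1-ν)*a^ν) * (b^ν*b^(1-ν))) by ring, e1, e2, e3]
    ring
  have hsxy : Real.sqrt (c^(-r) * (a^(1-ν)*b^ν)) * Real.sqrt (c^r * (a^ν*b^(1-ν)))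
      = Real.sqrt a * Real.sqrt b := by
    rw [← Real.sqrt_mul hx.le, hxy, Real.sqrt_mul ha.le]
  have amgm : 2 * (Real.sqrt a * Real.sqrt b) ≤ c^(-r) * (a^(1-ν)*b^ν) + c^r * (a^ν*b^(1-ν)) := by
    nlinarith [sq_nonneg (Real.sqrt (c^(-r) * (a^(1-ν)*b^ν)) - Real.sqrt (c^r * (a^ν*b^(1-ν)))),
      Real.sq_sqrt hx.le, Real.sq_sqrt hy.le, hsxy]
  have hsq : (Real.sqrt a - Real.sqrt b)^2 = a - 2*(Real.sqrt a * Real.sqrt b) + b := by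
    rw [sub_sq, Real.sq_sqrt ha.le, Real.sq_sqrt hb.le]; ring
  linarith [hst, amgm]
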